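/- Let m ≥ 1 and n be integers with ⌈m/p⌉ ≤ n ≤ m. Then: (i) C(n,m) is p-integral, and if C(n,m) ≠ 0 then padicValRat p (C(n,m)) ≥ (n·p − m)/(p − 1) − 1 (an inequality of rational numbers) and padicValRat p (C(n,m)) ≥ 0; (ii) C(n,m) is a p-adic unit — that is, C(n,m) ≠ 0 and padicValRat p (C(n,m)) = 0 — if and only if n = ⌈m/p⌉; (iii) if n = ⌈m/p⌉ then, setting ε := m − (n−1)·p (so 1 ≤ ε ≤ p), one has C(n,m) ≡ (−1)^{ε−1} (mod p), i.e. either C(n,m) = (−1)^{ε−1} or padicValRat p (C(n,m) − (−1)^{ε−1}) ≥ 1. -/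

import Mathlib

open Finset

/-- The rational numbers `C(n,m) = (m/(np)) ∑ ∏_{k=1}^n (p choose i_k)`, the sum ranging over
all `n`-tuples `(i_1, …, i_n)` with `1 ≤ i_k ≤ p` and `i_1 + ⋯ + i_n = m`. -/
noncomputable def dworkC (p n m : ℕ) : ℚ :=
  (m : ℚ) / ((n : ℚ) * (p : ℚ)) *
    ∑ i ∈ (Fintype.piFinset fun _ : Fin n => Finset.Icc 1 p).filter
        (fun i => ∑ k, i k = m),
      ∏ k, (p.choose (i k) : ℚ)


def dworkT (p n m : ℕ) : Finset (Fin (n+1) → ℕ) :=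
  (Fintype.piFinset fun _ : Fin (n+1) => Finset.Icc 1 p).filter (fun i => ∑ k, i k = m)

def dworkD (p n m : ℕ) : ℕ :=
  ∑ i ∈ dworkT p n m, (p-1).choose (i 0 - 1) * ∏ j : Fin n, p.choose (i j.succ)

lemma sum_coord_eq (p n m : ℕ) (k : Fin (n+1)) :
    ∑ i ∈ dworkT p n m, (i k * ∏ j, p.choose (i j)) =
    ∑ i ∈ dworkT p n m, (i 0 * ∏ j, p.choose (i j)) := by
  apply Finset.sum_equiv ((Equiv.swap (0 : Fin (n+1)) k).arrowCongr (Equiv.refl ℕ))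
  · intro f
    simp only [dworkT, Finset.mem_filter, Fintype.mem_piFinset, Equiv.arrowCongr_apply,
      Equiv.refl_symm, Equiv.coe_refl, Function.comp, Equiv.symm_swap, id_eq]
    constructor
    · rintro ⟨h1, h2⟩
      refine ⟨fun j => h1 _, ?_⟩
      rw [← h2]
      exact Equiv.sum_comp (Equiv.swap 0 k) f
    · rintro ⟨h1, h2⟩
      refine ⟨fun j => by simpa using h1 ((Equiv.swap 0 k) j), ?_⟩
      rw [← h2]
      exact (Equiv.sum_comp (Equiv.swap 0 k) f).symm
  · intro f hf
    simp only [Equiv.arrowCongr_apply, Equiv.refl_symm, Equiv.coe_refl, Function.comp,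
      Equiv.symm_swap, id_eq]
    rw [Equiv.swap_apply_left]
    congr 1
    exact (Equiv.prod_comp (Equiv.swap 0 k) (fun x => p.choose (f x))).symm


lemma m_mul_sum (p n m : ℕ) (hp : p ≠ 0) :
    m * ∑ i ∈ dworkT p n m, ∏ j, p.choose (i j) = (n+1) * (p * dworkD p n m) := by
  rw [Finset.mul_sum]
  have step1 : ∀ i ∈ dworkT p n m, m * ∏ j, p.choose (i j)
      = ∑ k : Fin (n+1), i k * ∏ j, p.choose (i j) := by
    intro i hi
    rw [← Finset.sum_mul]
    congr 1
    exact ((Finset.mem_filter.1 hi).2).symm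
  rw [Finset.sum_congr rfl step1, Finset.sum_comm]
  have step2 : ∀ k : Fin (n+1), ∑ i ∈ dworkT p n m, i k * ∏ j, p.choose (i j)
      = p * dworkD p n m := by
    intro k
    rw [sum_coord_eq, dworkD, Finset.mul_sum]
    apply Finset.sum_congr rfl
    intro i hi
    have hi1 : 1 ≤ i 0 := by
      have := (Fintype.mem_piFinset.1 (Finset.mem_filter.1 hi).1) 0
      exact (Finset.mem_Icc.1 this).1
    have key : i 0 * p.choose (i 0) = p * (p-1).choose (i 0 - 1) := by
      have h := Nat.add_one_mul_choose_eq (p-1) (i 0 - 1)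
      rw [Nat.sub_add_cancel (Nat.one_le_iff_ne_zero.2 hp), Nat.sub_add_cancel hi1] at h
      rw [h, mul_comm]
    rw [Fin.prod_univ_succ, ← mul_assoc, key, mul_assoc]
  rw [Finset.sum_congr rfl (fun k _ => step2 k), Finset.sum_const, Finset.card_univ,
    Fintype.card_fin, smul_eq_mul]

lemma dworkC_eq (p n m : ℕ) (hp : p ≠ 0) :
    (m : ℚ) / (((n:ℚ)+1) * (p : ℚ)) *
      ∑ i ∈ dworkT p n m, ∏ k, (p.choose (i k) : ℚ) = (dworkD p n m : ℚ) := by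
  have key := m_mul_sum p n m hp
  have keyq : (m : ℚ) * ∑ i ∈ dworkT p n m, ∏ k, (p.choose (i k) : ℚ)
      = ((n:ℚ)+1) * ((p:ℚ) * (dworkD p n m : ℚ)) := by
    exact_mod_cast congrArg (Nat.cast : ℕ → ℚ) key
  have hne : ((n:ℚ)+1) * (p:ℚ) ≠ 0 := by
    have : (p:ℚ) ≠ 0 := Nat.cast_ne_zero.2 hp
    positivity
  field_simp
  rw [keyq]; ring

lemma pow_dvd_dworkD (p n m : ℕ) (hp : p.Prime) (c : ℕ)
    (hc : m + c * (p-1) < (n+1) * p) : p ^ c ∣ dworkD p n m := by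
  classical
  apply Finset.dvd_sum
  intro i hi
  set s := Finset.univ.filter (fun j : Fin n => i j.succ ≠ p) with hs
  set t := Finset.univ.filter (fun j : Fin n => i j.succ = p) with ht
  have hmem := Finset.mem_filter.1 hi
  have hpi : ∀ j, i j ∈ Finset.Icc 1 p := Fintype.mem_piFinset.1 hmem.1
  have hsum : ∑ k, i k = m := hmem.2
  have hcard : s.card + t.card = n := by
    have := Finset.card_filter_add_card_filter_not
      (s := (Finset.univ : Finset (Fin n))) (p := fun j : Fin n => i j.succ ≠ p)
    simpa [← hs, ← ht] using this
  -- p ^ s.card divides the product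
  have h1 : p ^ s.card ∣ ∏ j : Fin n, p.choose (i j.succ) := by
    calc p ^ s.card = ∏ _j ∈ s, p := by rw [Finset.prod_const]
    _ ∣ ∏ j ∈ s, p.choose (i j.succ) := by
        apply Finset.prod_dvd_prod_of_dvd
        intro j hj
        have hj' : i j.succ ≠ p := by
          have := (Finset.mem_filter.1 (hs ▸ hj)).2; exact this
        have h2 := Finset.mem_Icc.1 (hpi j.succ)
        exact Nat.Prime.dvd_choose_self hp (by omega) (by omega)
    _ ∣ ∏ j : Fin n, p.choose (i j.succ) :=
        Finset.prod_dvd_prod_of_subset s Finset.univ _ (Finset.subset_univ s)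
  -- lower bound on m
  have hsplit : ∑ j ∈ s, i j.succ + ∑ j ∈ t, i j.succ = ∑ j : Fin n, i j.succ := by
    have := Finset.sum_filter_add_sum_filter_not Finset.univ
      (fun j : Fin n => i j.succ ≠ p) (fun j => i j.succ)
    simpa [← hs, ← ht] using this
  have hA : ∑ j ∈ t, i j.succ = t.card * p := by
    have hall : ∀ j ∈ t, i j.succ = p := fun j hj => by
      have hj2 := hj
      rw [ht] at hj2
      exact (Finset.mem_filter.1 hj2).2
    rw [Finset.sum_congr rfl hall, Finset.sum_const, smul_eq_mul]
  have hB : s.card ≤ ∑ j ∈ s, i j.succ := by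
    calc s.card = ∑ _j ∈ s, 1 := by simp
    _ ≤ ∑ j ∈ s, i j.succ := Finset.sum_le_sum (fun j _ => (Finset.mem_Icc.1 (hpi j.succ)).1)
  have h0 : 1 ≤ i 0 := (Finset.mem_Icc.1 (hpi 0)).1
  have hm : m = i 0 + ∑ j : Fin n, i j.succ := by rw [← hsum, Fin.sum_univ_succ]
  -- conclude c ≤ s.card
  have h2 : c ≤ s.card := by
    by_contra hlt
    push_neg at hlt
    have hp1 : 1 ≤ p := hp.one_le
    have key : 1 + t.card * p + s.card + (s.card + 1) * (p - 1)
        = (s.card + t.card + 1) * p := by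
      zify [hp1]
      ring
    have key2 : (n+1) * p = (s.card + t.card + 1) * p := by rw [hcard]
    have hmul : (s.card + 1) * (p-1) ≤ c * (p - 1) := Nat.mul_le_mul_right _ hlt
    omega
  exact dvd_trans (pow_dvd_pow p h2) (Dvd.dvd.mul_left h1 _)

lemma choose_zmod (p : ℕ) (hp : p.Prime) {k : ℕ} (hk : k ≤ p - 1) :
    (((p-1).choose k : ZMod p)) = (-1) ^ k := by
  induction k with
  | zero => simp
  | succ k ih =>
    have hp2 : 2 ≤ p := hp.two_le
    have h1 : (p-1).choose k + (p-1).choose (k+1) = p.choose (k+1) := by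
      have hpe : p = (p-1) + 1 := by omega
      conv_rhs => rw [hpe]
      exact (Nat.choose_succ_succ _ _).symm
    have hdvd : p ∣ p.choose (k+1) :=
      Nat.Prime.dvd_choose_self hp (Nat.succ_ne_zero k) (by omega)
    have hz : ((p-1).choose k : ZMod p) + ((p-1).choose (k+1) : ZMod p) = 0 := by
      have := congrArg (Nat.cast : ℕ → ZMod p) h1
      push_cast at this
      rw [this, (ZMod.natCast_eq_zero_iff _ _).2 hdvd]
    rw [ih (by omega)] at hz
    have : ((p-1).choose (k+1) : ZMod p) = -((-1)^k) := by linear_combination hz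
    rw [this]
    ring

lemma dworkD_mod (p n m : ℕ) (hp : p.Prime)
    (hlo : n * p < m) (hhi : m ≤ (n+1) * p) :
    (dworkD p n m : ZMod p) = (-1) ^ (m - n * p - 1) := by
  classical
  set ε := m - n * p with hε
  have hnp : (n+1)*p = n*p + p := by ring
  have hε1 : 1 ≤ ε := by omega
  have hεp : ε ≤ p := by omega
  obtain ⟨i₀, hi₀0, hi₀s⟩ : ∃ i₀ : Fin (n+1) → ℕ, i₀ 0 = ε ∧ ∀ j : Fin n, i₀ j.succ = p :=
    ⟨fun k => if k = 0 then ε else p, by simp, fun j => by simp [Fin.succ_ne_zero j]⟩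
  have hmem : i₀ ∈ dworkT p n m := by
    rw [dworkT, Finset.mem_filter, Fintype.mem_piFinset]
    constructor
    · intro k
      rcases eq_or_ne k 0 with rfl | hk
      · rw [hi₀0]; exact Finset.mem_Icc.2 ⟨hε1, hεp⟩
      · obtain ⟨j, rfl⟩ := Fin.eq_succ_of_ne_zero hk
        rw [hi₀s j]
        exact Finset.mem_Icc.2 ⟨hp.one_le, le_refl p⟩
    · rw [Fin.sum_univ_succ, hi₀0]
      rw [Finset.sum_congr rfl (fun j _ => hi₀s j), Finset.sum_const, Finset.card_univ,
        Fintype.card_fin, smul_eq_mul]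
      omega
  have hsplit : dworkD p n m
      = (p-1).choose (ε - 1) * ∏ j : Fin n, p.choose (i₀ j.succ)
        + ∑ i ∈ (dworkT p n m).erase i₀,
            (p-1).choose (i 0 - 1) * ∏ j : Fin n, p.choose (i j.succ) := by
    rw [dworkD, ← Finset.add_sum_erase _ _ hmem, hi₀0]
  have hprod : ∏ j : Fin n, p.choose (i₀ j.succ) = 1 := by
    rw [Finset.prod_congr rfl (fun j _ => by rw [hi₀s j, Nat.choose_self])]
    simp
  have hrest : ∀ i ∈ (dworkT p n m).erase i₀,
      p ∣ (p-1).choose (i 0 - 1) * ∏ j : Fin n, p.choose (i j.succ) := by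
    intro i hi
    have hine := Finset.ne_of_mem_erase hi
    have hiT := Finset.mem_of_mem_erase hi
    have hmem2 := Finset.mem_filter.1 hiT
    have hpi : ∀ j, i j ∈ Finset.Icc 1 p := Fintype.mem_piFinset.1 hmem2.1
    have hsum : ∑ k, i k = m := hmem2.2
    have : ∃ j : Fin n, i j.succ ≠ p := by
      by_contra hall
      push_neg at hall
      apply hine
      funext k
      rcases eq_or_ne k 0 with rfl | hk
      · rw [hi₀0]
        have hsum2 : ∑ j : Fin n, i j.succ = n * p := by
          have he := Finset.sum_congr rfl (fun j (_ : j ∈ Finset.univ) => hall j)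
          rw [he, Finset.sum_const, Finset.card_univ, Fintype.card_fin, smul_eq_mul]
        have hm2 : m = i 0 + n * p := by
          rw [← hsum, Fin.sum_univ_succ, hsum2]
        clear * - hm2 hε hlo
        omega
      · obtain ⟨j, rfl⟩ := Fin.eq_succ_of_ne_zero hk
        rw [hall j, hi₀s j]
    obtain ⟨j, hj⟩ := this
    have h2 := Finset.mem_Icc.1 (hpi j.succ)
    have : p ∣ p.choose (i j.succ) := Nat.Prime.dvd_choose_self hp
      (Nat.one_le_iff_ne_zero.1 h2.1) (lt_of_le_of_ne h2.2 hj)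
    exact Dvd.dvd.mul_left (dvd_trans this
      (Finset.dvd_prod_of_mem (fun j => p.choose (i j.succ)) (Finset.mem_univ j))) _
  have hzero0 : ((∑ x ∈ (dworkT p n m).erase i₀,
      (p-1).choose (x 0 - 1) * ∏ j : Fin n, p.choose (x j.succ) : ℕ) : ZMod p) = 0 := by
    rw [Nat.cast_sum]
    exact Finset.sum_eq_zero (fun x hx =>
      (ZMod.natCast_eq_zero_iff _ _).2 (hrest x hx))
  have : (dworkD p n m : ZMod p) = ((p-1).choose (ε - 1) : ZMod p) := by
    rw [hsplit, hprod, mul_one, Nat.cast_add, hzero0, add_zero]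
  rw [this, choose_zmod p hp (Nat.sub_le_sub_right hεp 1)]

lemma dworkC_cast (p n m : ℕ) (hp : p ≠ 0) :
    dworkC p (n+1) m = (dworkD p n m : ℚ) := by
  rw [dworkC, ← dworkC_eq p n m hp]
  have : ((n+1 : ℕ) : ℚ) = (n : ℚ) + 1 := by push_cast; ring
  rw [this]
  rfl

/-- `p`-adic estimates for the coefficients `C(n,m)` (for `⌈m/p⌉ ≤ n ≤ m`, `m ≥ 1`):
(i) `C(n,m)` is `p`-integral and, when nonzero, `ord_p C(n,m) ≥ (np-m)/(p-1) - 1`;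
(ii) `C(n,m)` is a `p`-adic unit iff `n = ⌈m/p⌉`;
(iii) if `n = ⌈m/p⌉` then `C(n,m) ≡ (-1)^{ε-1} mod p` where `ε = m - (n-1)p`. -/
theorem dworkC_padic_estimates
    (p : ℕ) [Fact p.Prime] (m n : ℕ) (hm : 1 ≤ m)
    (h1 : m ⌈/⌉ p ≤ n) (h2 : n ≤ m) :
    (dworkC p n m ≠ 0 →
      ((n : ℚ) * (p : ℚ) - (m : ℚ)) / ((p : ℚ) - 1) - 1 ≤
          (padicValRat p (dworkC p n m) : ℚ) ∧
        0 ≤ padicValRat p (dworkC p n m)) ∧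
    ((dworkC p n m ≠ 0 ∧ padicValRat p (dworkC p n m) = 0) ↔ n = m ⌈/⌉ p) ∧
    (n = m ⌈/⌉ p →
      dworkC p n m = (-1 : ℚ) ^ (m - (n - 1) * p - 1) ∨
        1 ≤ padicValRat p (dworkC p n m - (-1 : ℚ) ^ (m - (n - 1) * p - 1))) := by
  have hp : p.Prime := Fact.out
  have hp2 : 2 ≤ p := hp.two_le
  have hceil_le : ∀ k : ℕ, m ⌈/⌉ p ≤ k ↔ m ≤ p * k := fun k => by
    rw [ceilDiv_le_iff_le_smul (by omega : 0 < p), smul_eq_mul]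
  have hceil1 : 1 ≤ m ⌈/⌉ p := by
    by_contra h
    push_neg at h
    have h0 : m ⌈/⌉ p ≤ 0 := by omega
    have := (hceil_le 0).1 h0
    omega
  obtain ⟨n', rfl⟩ : ∃ n', n = n' + 1 := ⟨n - 1, by omega⟩
  have hmle : m ≤ p * (n' + 1) := (hceil_le _).1 h1
  have hC : dworkC p (n'+1) m = (dworkD p n' m : ℚ) := dworkC_cast p n' m (by omega)
  have hval : dworkD p n' m ≠ 0 →
      padicValRat p (dworkC p (n'+1) m) = (padicValNat p (dworkD p n' m) : ℤ) := by
    intro _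
    rw [hC, ← padicValRat_of_nat]
  -- the unit case preliminaries
  have hunit : n' + 1 = m ⌈/⌉ p →
      (dworkD p n' m : ZMod p) = (-1) ^ (m - n' * p - 1) ∧ ¬ p ∣ dworkD p n' m := by
    intro hn
    have hlo : n' * p < m := by
      by_contra h
      push_neg at h
      have : m ⌈/⌉ p ≤ n' := (hceil_le n').2 (by rw [mul_comm]; exact h)
      omega
    have hhi : m ≤ (n'+1) * p := by rw [mul_comm]; exact hmle
    have hzmod := dworkD_mod p n' m hp hlo hhi
    refine ⟨hzmod, ?_⟩
    intro hdvd
    have h0 : ((dworkD p n' m : ℕ) : ZMod p) = 0 :=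
      (ZMod.natCast_eq_zero_iff _ _).2 hdvd
    rw [h0] at hzmod
    haveI : Fact (1 < p) := ⟨hp.one_lt⟩
    exact pow_ne_zero _ (neg_ne_zero.2 (one_ne_zero)) hzmod.symm
  refine ⟨?_, ⟨?_, ?_⟩, ?_⟩
  · -- part (i)
    intro hne
    have hD0 : dworkD p n' m ≠ 0 := by
      intro h
      rw [hC, h] at hne
      simp at hne
    have hv := hval hD0
    constructor
    · -- the valuation lower bound
      set v := padicValNat p (dworkD p n' m) with hvdef
      have hK : m ≤ (n'+1) * p := by rw [mul_comm]; exact hmle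
      have hp1q : (0:ℚ) < (p:ℚ) - 1 := by
        have : (2:ℚ) ≤ (p:ℚ) := by exact_mod_cast hp2
        linarith
      rcases eq_or_lt_of_le hK with heq | hlt
      · have hnum : ((n'+1 : ℕ) : ℚ) * (p:ℚ) - (m:ℚ) = 0 := by
          rw [heq]; push_cast; ring
        rw [hv, hnum]
        have : (0:ℚ) ≤ ((v : ℤ) : ℚ) := by positivity
        rw [zero_div]
        linarith
      · set c := ((n'+1) * p - m - 1) / (p-1) with hcdef
        have hle : c * (p-1) ≤ (n'+1) * p - m - 1 := by
          rw [hcdef]; exact Nat.div_mul_le_self _ _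
        have hub0 : (n'+1) * p - m - 1 < (p-1) * (c + 1) := by
          rw [hcdef]; exact Nat.lt_mul_div_succ _ (by omega)
        have hcle : m + c * (p-1) < (n'+1) * p := by omega
        have hdvd := pow_dvd_dworkD p n' m hp c hcle
        have hcv : c ≤ v := (padicValNat_dvd_iff_le hD0).1 hdvd
        have hub : (n'+1) * p - m ≤ (p-1) * (c+1) := by omega
        rw [hv]
        rw [sub_le_iff_le_add, div_le_iff₀ hp1q]
        have hcast : (((n'+1) * p - m : ℕ) : ℚ) ≤ (((p-1) * (c+1) : ℕ) : ℚ) :=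
          Nat.cast_le.2 hub
        have e1 : (((n'+1) * p - m : ℕ) : ℚ) = ((n'+1 : ℕ) : ℚ) * (p:ℚ) - (m:ℚ) := by
          have := hlt.le
          push_cast [Nat.cast_sub this]
          ring
        have e2 : (((p-1) * (c+1) : ℕ) : ℚ) = ((p:ℚ) - 1) * ((c:ℚ)+1) := by
          push_cast [Nat.cast_sub (by omega : 1 ≤ p)]
          ring
        rw [e1, e2] at hcast
        calc ((n'+1 : ℕ):ℚ) * (p:ℚ) - (m:ℚ) ≤ ((p:ℚ) - 1) * ((c:ℚ)+1) := hcast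
          _ ≤ ((p:ℚ) - 1) * ((((v : ℤ)):ℚ)+1) := by
              have : ((c:ℚ)) ≤ (((v : ℤ)):ℚ) := by exact_mod_cast hcv
              nlinarith
          _ = (((v : ℤ)):ℚ) * ((p:ℚ) - 1) + ((p:ℚ)-1) := by ring
          _ ≤ (((v : ℤ)):ℚ) * ((p:ℚ) - 1) + ((p:ℚ)-1) * 1 := by linarith
          _ = ((((v : ℤ)):ℚ) + 1) * ((p:ℚ) - 1) := by ring
    · rw [hv]
      positivity
  · -- part (ii), forward
    rintro ⟨hne, hv0⟩
    by_contra hne2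
    have hceiln' : m ⌈/⌉ p ≤ n' := by omega
    have hm' : m ≤ p * n' := (hceil_le n').1 hceiln'
    have hc1 : m + 1 * (p-1) < (n'+1) * p := by
      have h4 : (n'+1) * p = p * n' + p := by ring
      omega
    have hdvd := pow_dvd_dworkD p n' m hp 1 hc1
    rw [pow_one] at hdvd
    have hD0 : dworkD p n' m ≠ 0 := by
      intro h
      rw [hC, h] at hne
      simp at hne
    have hge := one_le_padicValNat_of_dvd hD0 hdvd
    rw [hval hD0] at hv0
    omega
  · -- part (ii), backward
    intro hn
    obtain ⟨hzmod, hDne⟩ := hunit hn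
    have hD0 : dworkD p n' m ≠ 0 := fun h => hDne (h ▸ dvd_zero p)
    refine ⟨by rw [hC]; exact_mod_cast Nat.cast_ne_zero.2 hD0, ?_⟩
    rw [hval hD0, padicValNat.eq_zero_of_not_dvd hDne]
    rfl
  · -- part (iii)
    intro hn
    obtain ⟨hzmod, hDne⟩ := hunit hn
    have hD0 : dworkD p n' m ≠ 0 := fun h => hDne (h ▸ dvd_zero p)
    have hexp : m - (n' + 1 - 1) * p - 1 = m - n' * p - 1 := by
      simp
    rw [hexp]
    set e := m - n' * p - 1 with hedef
    set A : ℤ := (dworkD p n' m : ℤ) - (-1)^e with hAdef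
    have hpA : (p:ℤ) ∣ A := by
      have h0 : ((A : ℤ) : ZMod p) = 0 := by
        rw [hAdef]
        push_cast
        rw [hzmod]
        ring
      exact (ZMod.intCast_zmod_eq_zero_iff_dvd _ _).1 h0
    rcases eq_or_ne A 0 with h0 | h0
    · left
      rw [hC]
      have : (dworkD p n' m : ℤ) = (-1)^e := by omega
      exact_mod_cast congrArg (Int.cast : ℤ → ℚ) this
    · right
      have hsub : dworkC p (n'+1) m - (-1:ℚ)^e = ((A : ℤ) : ℚ) := by
        rw [hC, hAdef]
        push_cast
        ring
      rw [hsub, padicValRat.of_int]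
      have hdvd' : p ∣ A.natAbs := by
        have := Int.natAbs_dvd_natAbs.2 hpA
        simpa using this
      have hge := one_le_padicValNat_of_dvd (Int.natAbs_ne_zero.2 h0) hdvd'
      have : padicValInt p A = padicValNat p A.natAbs := rfl
      rw [this]
      exact_mod_cast hge
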